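/- Let (Γ,K) be a bilinear lattice with a complete exceptional sequence (γ₁,…,γₙ). Then c := s_{γ₁} ∘ ⋯ ∘ s_{γₙ} is a Coxeter element, i.e., ⟨α,β⟩ + ⟨β,c(α)⟩ = 0 for all α,β ∈ Γ. -/

import Mathlib

/-- `α` is a pseudo-root of the bilinear lattice `(Γ, K)`. -/
def IsPseudoRootK {Γ : Type*} [AddCommGroup Γ] [Module ℤ Γ]
    (K : Γ →ₗ[ℤ] Γ →ₗ[ℤ] ℤ) (α : Γ) : Prop :=
  0 < K α α ∧ ∀ γ : Γ, K α α ∣ K α γ ∧ K α α ∣ K γ α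

/-- The reflection at a pseudo-root `α`:
`s_α γ = γ − (⟨γ,α⟩ + ⟨α,γ⟩)/⟨α,α⟩ • α` (exact integer division). -/
def latRefl {Γ : Type*} [AddCommGroup Γ] [Module ℤ Γ]
    (K : Γ →ₗ[ℤ] Γ →ₗ[ℤ] ℤ) (α γ : Γ) : Γ :=
  γ - ((K γ α + K α γ) / K α α) • α

section Aux

variable {Γ : Type*} [AddCommGroup Γ] [Module ℤ Γ]
  (K : Γ →ₗ[ℤ] Γ →ₗ[ℤ] ℤ) {n : ℕ} (γ : Fin n → Γ)

/-- Composition of the reflections indexed by a list. -/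
def latReflComp (l : List (Fin n)) : Γ → Γ :=
  (l.map fun i => latRefl K (γ i)).foldr (· ∘ ·) id

@[simp] lemma latReflComp_nil (x : Γ) : latReflComp K γ [] x = x := rfl

@[simp] lemma latReflComp_cons (i : Fin n) (l : List (Fin n)) (x : Γ) :
    latReflComp K γ (i :: l) x = latRefl K (γ i) (latReflComp K γ l x) := rfl

lemma latReflComp_append (l₁ l₂ : List (Fin n)) (x : Γ) :
    latReflComp K γ (l₁ ++ l₂) x = latReflComp K γ l₁ (latReflComp K γ l₂ x) := by
  induction l₁ with
  | nil => rfl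
  | cons i t ih => simp [ih]

lemma latRefl_apply_left (i : Fin n) (x y : Γ) :
    K (latRefl K (γ i) x) y
      = K x y - ((K x (γ i) + K (γ i) x) / K (γ i) (γ i)) * K (γ i) y := by
  simp [latRefl, smul_eq_mul]

lemma latRefl_apply_right (i : Fin n) (x y : Γ) :
    K y (latRefl K (γ i) x)
      = K y x - ((K x (γ i) + K (γ i) x) / K (γ i) (γ i)) * K y (γ i) := by
  simp [latRefl, smul_eq_mul]

end Aux

theorem stmt_11 {Γ : Type*} [AddCommGroup Γ] [Module ℤ Γ]
    [Module.Free ℤ Γ] [Module.Finite ℤ Γ]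
    (K : Γ →ₗ[ℤ] Γ →ₗ[ℤ] ℤ)
    (hnd₁ : ∀ α : Γ, (∀ β, K α β = 0) → α = 0)
    (hnd₂ : ∀ β : Γ, (∀ α, K α β = 0) → β = 0)
    {n : ℕ} (γ : Fin n → Γ) (hpr : ∀ i, IsPseudoRootK K (γ i))
    (horth : ∀ i j : Fin n, j < i → K (γ i) (γ j) = 0)
    (hspan : Submodule.span ℤ (Set.range γ) = ⊤) :
    ∀ α β : Γ,
      K α β + K β (((List.ofFn fun i => latRefl K (γ i)).foldr (· ∘ ·) id) α) = 0 := by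
  -- exact division
  have hdvd : ∀ (i : Fin n) (x : Γ),
      ((K x (γ i) + K (γ i) x) / K (γ i) (γ i)) * K (γ i) (γ i)
        = K x (γ i) + K (γ i) x := fun i x =>
    Int.ediv_mul_cancel (dvd_add ((hpr i).2 x).2 ((hpr i).2 x).1)
  -- L2 : reflections at larger indices don't change ⟨·, γ m⟩
  have L2 : ∀ (i m : Fin n) (x : Γ), m < i →
      K (latRefl K (γ i) x) (γ m) = K x (γ m) := by
    intro i m x h
    rw [latRefl_apply_left, horth i m h, mul_zero, sub_zero]
  -- L3 : reflections at smaller indices don't change ⟨γ m, ·⟩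
  have L3 : ∀ (i m : Fin n) (x : Γ), i < m →
      K (γ m) (latRefl K (γ i) x) = K (γ m) x := by
    intro i m x h
    rw [latRefl_apply_right, horth m i h, mul_zero, sub_zero]
  -- L4 : the reflection at index m itself
  have L4 : ∀ (m : Fin n) (x : Γ),
      K (γ m) (latRefl K (γ m) x) = -(K x (γ m)) := by
    intro m x
    rw [latRefl_apply_right, hdvd m x]
    ring
  -- composite over lists of larger indices preserves ⟨·, γ m⟩
  have hpost : ∀ (m : Fin n) (l : List (Fin n)), (∀ i ∈ l, m < i) → ∀ x : Γ,
      K (latReflComp K γ l x) (γ m) = K x (γ m) := by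
    intro m l
    induction l with
    | nil => intro _ x; rfl
    | cons i t ih =>
      intro h x
      rw [latReflComp_cons, L2 i m _ (h i (by simp)),
        ih (fun j hj => h j (List.mem_cons_of_mem _ hj)) x]
  -- composite over lists of smaller indices preserves ⟨γ m, ·⟩
  have hpre : ∀ (m : Fin n) (l : List (Fin n)), (∀ i ∈ l, i < m) → ∀ x : Γ,
      K (γ m) (latReflComp K γ l x) = K (γ m) x := by
    intro m l
    induction l with
    | nil => intro _ x; rfl
    | cons i t ih =>
      intro h x
      rw [latReflComp_cons, L3 i m _ (h i (by simp)),
        ih (fun j hj => h j (List.mem_cons_of_mem _ hj)) x]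
  intro α β
  set c : Γ → Γ := (List.ofFn fun i => latRefl K (γ i)).foldr (· ∘ ·) id with hc
  have hcA : c = latReflComp K γ (List.finRange n) := by
    rw [hc, latReflComp, List.ofFn_eq_map]
  -- key computation
  have key : ∀ m : Fin n, K (γ m) (c α) = -(K α (γ m)) := by
    intro m
    obtain ⟨l₁, l₂, hl⟩ := List.append_of_mem (List.mem_finRange m)
    have hpw : (List.finRange n).Pairwise (· < ·) := List.pairwise_lt_finRange n
    rw [hl, List.pairwise_append] at hpw
    obtain ⟨-, h2, h12⟩ := hpw
    rw [List.pairwise_cons] at h2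
    have h1 : ∀ i ∈ l₁, i < m := fun i hi => h12 i hi m List.mem_cons_self
    rw [hcA, hl, latReflComp_append, hpre m l₁ h1, latReflComp_cons, L4,
      hpost m l₂ h2.1]
  -- conclude by linearity and spanning
  have hz : K α + K.flip (c α) = 0 := by
    apply LinearMap.ext_on hspan
    rintro x ⟨m, rfl⟩
    simp [LinearMap.flip_apply, key m]
  have := DFunLike.congr_fun hz β
  simpa [LinearMap.flip_apply] using this
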